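/- Consider the semidiscrete finite volume scheme for the 1D Navier–Stokes–Korteweg system on the periodic grid with N cells. Suppose ρ, m : ℝ → (ZMod N → ℝ) satisfy, for every time t and every index i, ρ_i(t) > 0 and the ODEs (in the sense of HasDerivAt) −dρ_i/dt = ∇ᶜ(ρu)_i − λ(t) h Δ_h ρ_i and −dm_i/dt = ∇ᶜ(ρu²)_i + ∇ᶜ(p∘ρ)_i − λ(t) h Δ_h m_i − μ Δ_h u_i − κ ∇⁻[ (ρ_{i+1} Δ_h ρ_i + ρ_i Δ_h ρ_{i+1})/2 − (1/2) (∇⁺ρ_i)² ], where u_i = m_i/ρ_i. Then the total momentum t ↦ ∑_{i} m_i(t) is constant in time, i.e. its derivative is zero at every t. -/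

import Mathlib

open Finset

noncomputable section

/-- Grid spacing `h = 1/N`. -/
def hh (N : ℕ) : ℝ := 1 / (N : ℝ)

/-- Central difference `∇ᶜφ_i = (φ_{i+1} − φ_{i−1})/(2h)`. -/
def dC (N : ℕ) (φ : ZMod N → ℝ) (i : ZMod N) : ℝ := (φ (i + 1) - φ (i - 1)) / (2 * hh N)

/-- Forward difference `∇⁺φ_i = (φ_{i+1} − φ_i)/h`. -/
def dP (N : ℕ) (φ : ZMod N → ℝ) (i : ZMod N) : ℝ := (φ (i + 1) - φ i) / hh N

/-- Backward difference `∇⁻φ_i = (φ_i − φ_{i−1})/h`. -/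
def dM (N : ℕ) (φ : ZMod N → ℝ) (i : ZMod N) : ℝ := (φ i - φ (i - 1)) / hh N

/-- Discrete Laplacian `Δ_hφ_i = (φ_{i+1} − 2φ_i + φ_{i−1})/h²`. -/
def dL (N : ℕ) (φ : ZMod N → ℝ) (i : ZMod N) : ℝ :=
  (φ (i + 1) - 2 * φ i + φ (i - 1)) / (hh N) ^ 2

/-- Right-hand side of the semidiscrete density equation: `−dρ_i/dt = Frho i`. -/
def Frho (N : ℕ) (lamt : ℝ) (ρ m : ZMod N → ℝ) (i : ZMod N) : ℝ :=
  dC N (fun j => ρ j * (m j / ρ j)) i - lamt * hh N * dL N ρ i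

/-- Right-hand side of the semidiscrete momentum equation: `−dm_i/dt = Fm i`. -/
def Fm (N : ℕ) (p : ℝ → ℝ) (μ κ lamt : ℝ) (ρ m : ZMod N → ℝ) (i : ZMod N) : ℝ :=
  dC N (fun j => ρ j * (m j / ρ j) ^ 2) i + dC N (fun j => p (ρ j)) i
    - lamt * hh N * dL N m i - μ * dL N (fun j => m j / ρ j) i
    - κ * dM N (fun j =>
        (ρ (j + 1) * dL N ρ j + ρ j * dL N ρ (j + 1)) / 2 - (1 / 2) * (dP N ρ j) ^ 2) i


lemma sum_shift (N : ℕ) [NeZero N] (φ : ZMod N → ℝ) (c : ZMod N) :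
    ∑ i : ZMod N, φ (i + c) = ∑ i : ZMod N, φ i :=
  Fintype.sum_equiv (Equiv.addRight c) _ _ (fun i => rfl)

lemma sum_dC (N : ℕ) [NeZero N] (φ : ZMod N → ℝ) :
    ∑ i : ZMod N, dC N φ i = 0 := by
  simp only [dC, div_eq_mul_inv, ← Finset.sum_mul, Finset.sum_sub_distrib]
  have h1 := sum_shift N φ 1
  have h2 := sum_shift N φ (-1)
  simp only [sub_eq_add_neg] at *
  rw [h1, h2]; ring

lemma sum_dM (N : ℕ) [NeZero N] (φ : ZMod N → ℝ) :
    ∑ i : ZMod N, dM N φ i = 0 := by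
  simp only [dM, div_eq_mul_inv, ← Finset.sum_mul, Finset.sum_sub_distrib]
  have h2 := sum_shift N φ (-1)
  simp only [sub_eq_add_neg] at *
  rw [h2]; ring

lemma sum_dL (N : ℕ) [NeZero N] (φ : ZMod N → ℝ) :
    ∑ i : ZMod N, dL N φ i = 0 := by
  simp only [dL, div_eq_mul_inv, ← Finset.sum_mul, Finset.sum_add_distrib,
    Finset.sum_sub_distrib]
  have h1 := sum_shift N φ 1
  have h2 := sum_shift N φ (-1)
  simp only [sub_eq_add_neg, ← Finset.mul_sum] at *
  rw [h1, h2]; ring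

lemma sum_Fm (N : ℕ) [NeZero N] (p : ℝ → ℝ) (μ κ lamt : ℝ) (ρ m : ZMod N → ℝ) :
    ∑ i : ZMod N, Fm N p μ κ lamt ρ m i = 0 := by
  simp only [Fm, Finset.sum_add_distrib, Finset.sum_sub_distrib, ← Finset.mul_sum,
    sum_dC, sum_dM, sum_dL]
  ring

/-- Conservation of total momentum for the 1D semidiscrete NSK scheme. -/
theorem momentum_conservation_1d
    (N : ℕ) [NeZero N]
    (p : ℝ → ℝ) (μ κ : ℝ) (lam : ℝ → ℝ)
    (ρ m : ℝ → ZMod N → ℝ)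
    (hpos : ∀ t : ℝ, ∀ i : ZMod N, 0 < ρ t i)
    (hρ : ∀ t : ℝ, ∀ i : ZMod N,
      HasDerivAt (fun s => ρ s i) (-(Frho N (lam t) (ρ t) (m t) i)) t)
    (hm : ∀ t : ℝ, ∀ i : ZMod N,
      HasDerivAt (fun s => m s i) (-(Fm N p μ κ (lam t) (ρ t) (m t) i)) t) :
    ∀ t : ℝ, HasDerivAt (fun s => ∑ i : ZMod N, m s i) 0 t := by
  intro t
  have h := HasDerivAt.fun_sum (u := (Finset.univ : Finset (ZMod N)))
    (fun i _ => hm t i)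
  have hz : (∑ i : ZMod N, -(Fm N p μ κ (lam t) (ρ t) (m t) i)) = 0 := by
    rw [Finset.sum_neg_distrib, sum_Fm]; ring
  rw [hz] at h
  exact h
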